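/- If m is a positive integer divisible by 7, then the polynomial X^7 + X^3 + X^2 + X + 1 splits completely over F_{2^m}, and consequently the map x ↦ (x^9 + x^5 + x^4 + x^3 + x^2)/(x^8 + x^4 + x^2 + x + 1) is not injective on F_{2^m} (its numerator x^2(x^7+x^3+x^2+x+1) has more than one root while the denominator is nonzero at those roots). -/

import Mathlib

open Polynomial

private lemma sq_step {R : Type*} [CommRing R] {p a b : R} (h : p ∣ a - b) :
    p ∣ a ^ 2 - b ^ 2 :=
  h.trans ⟨a + b, by ring⟩

open Polynomial in
/-- If `7 ∣ m`, then `X^7 + X^3 + X^2 + X + 1` splits completely over `F_{2^m}`,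
and the map `x ↦ (x^9+x^5+x^4+x^3+x^2)/(x^8+x^4+x^2+x+1)` is not injective on `F_{2^m}`. -/
theorem stmt_15 (m : ℕ) (hm : 0 < m) (h7 : 7 ∣ m)
    (F : Type*) [Field F] [Fintype F] (hF : Fintype.card F = 2 ^ m) :
    Polynomial.Splits
        ((X ^ 7 + X ^ 3 + X ^ 2 + X + 1 : Polynomial F).map (RingHom.id F)) ∧
      ¬ Function.Injective (fun x : F =>
          (x ^ 9 + x ^ 5 + x ^ 4 + x ^ 3 + x ^ 2) /
            (x ^ 8 + x ^ 4 + x ^ 2 + x + 1)) := by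
  -- characteristic 2
  have h2F : (2 : F) = 0 := by
    have hc : ((Fintype.card F : ℕ) : F) = 0 := FiniteField.cast_card_eq_zero F
    rw [hF] at hc
    push_cast at hc
    exact pow_eq_zero_iff hm.ne' |>.mp hc
  have h2 : (2 : Polynomial F) = 0 := by
    rw [← map_ofNat (Polynomial.C : F →+* Polynomial F) 2, h2F, map_zero]
  set p : Polynomial F := X ^ 7 + X ^ 3 + X ^ 2 + X + 1 with hp
  -- p divides X^128 - X
  have h8 : p ∣ (X : Polynomial F) ^ 8 - (X ^ 4 + X ^ 3 + X ^ 2 + X) :=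
    ⟨X, by linear_combination (-(X:Polynomial F)^4 - X^3 - X^2 - X) * h2⟩
  have s3 : p ∣ ((X : Polynomial F) ^ 4 + X ^ 3 + X ^ 2 + X) ^ 2 - (X ^ 6 + X ^ 3 + X) :=
    ⟨X, by linear_combination ((X:Polynomial F)^7 + X^6 + 2*X^5 + X^4 - X) * h2⟩
  have s4 : p ∣ ((X : Polynomial F) ^ 6 + X ^ 3 + X) ^ 2 - (X ^ 5 + X ^ 4 + X ^ 2 + 1) :=
    ⟨X ^ 5 + X + 1, by
      linear_combination ((X:Polynomial F)^9 - X^8 - X^5 - X^3 - X^2 - X - 1) * h2⟩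
  have s5 : p ∣ ((X : Polynomial F) ^ 5 + X ^ 4 + X ^ 2 + 1) ^ 2 -
      (X ^ 6 + X ^ 5 + X ^ 4 + X ^ 2 + X + 1) :=
    ⟨X ^ 3 + X, by linear_combination ((X:Polynomial F)^9 + X^7 - X^3 - X) * h2⟩
  have s6 : p ∣ ((X : Polynomial F) ^ 6 + X ^ 5 + X ^ 4 + X ^ 2 + X + 1) ^ 2 - X :=
    ⟨X ^ 5 + X ^ 3 + 1, by
      linear_combination ((X:Polynomial F)^11 + X^10 + X^9 + X^8 + X^7 + 2*X^6
        + X^5 + X^4 + X^2) * h2⟩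
  have h16 : p ∣ (X : Polynomial F) ^ 16 - (X ^ 6 + X ^ 3 + X) := by
    have h' := (sq_step h8).add s3
    have e' : ((X:Polynomial F)^8)^2 - (X^4+X^3+X^2+X)^2 +
        ((X^4+X^3+X^2+X)^2 - (X^6+X^3+X)) = X^16 - (X^6+X^3+X) := by ring
    rwa [e'] at h'
  have h32 : p ∣ (X : Polynomial F) ^ 32 - (X ^ 5 + X ^ 4 + X ^ 2 + 1) := by
    have h' := (sq_step h16).add s4
    have e' : ((X:Polynomial F)^16)^2 - (X^6+X^3+X)^2 +
        ((X^6+X^3+X)^2 - (X^5+X^4+X^2+1)) = X^32 - (X^5+X^4+X^2+1) := by ring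
    rwa [e'] at h'
  have h64 : p ∣ (X : Polynomial F) ^ 64 - (X ^ 6 + X ^ 5 + X ^ 4 + X ^ 2 + X + 1) := by
    have h' := (sq_step h32).add s5
    have e' : ((X:Polynomial F)^32)^2 - (X^5+X^4+X^2+1)^2 +
        ((X^5+X^4+X^2+1)^2 - (X^6+X^5+X^4+X^2+X+1)) =
        X^64 - (X^6+X^5+X^4+X^2+X+1) := by ring
    rwa [e'] at h'
  have h128 : p ∣ (X : Polynomial F) ^ 128 - X := by
    have h' := (sq_step h64).add s6
    have e' : ((X:Polynomial F)^64)^2 - (X^6+X^5+X^4+X^2+X+1)^2 +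
        ((X^6+X^5+X^4+X^2+X+1)^2 - X) = X^128 - X := by ring
    rwa [e'] at h'
  -- p divides X^(2^(7k)) - X for k ≥ 1
  have key : ∀ k : ℕ, p ∣ (X : Polynomial F) ^ (2 ^ (7 * (k + 1))) - X := by
    intro k
    induction k with
    | zero => simpa using h128
    | succ n ih =>
      have hd : ((X : Polynomial F) ^ (2 ^ (7 * (n + 1))) - X) ∣
          ((X : Polynomial F) ^ (2 ^ (7 * (n + 1)))) ^ 128 - X ^ 128 := by
        have hgen : ∀ k : ℕ, ((X : Polynomial F) ^ (2 ^ (7 * (n + 1))) - X) ∣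
            ((X : Polynomial F) ^ (2 ^ (7 * (n + 1)))) ^ k - X ^ k :=
          fun k => sub_dvd_pow_sub_pow _ _ k
        exact hgen 128
      have h' := (ih.trans hd).add h128
      have e' : ((X : Polynomial F) ^ (2 ^ (7 * (n + 1)))) ^ 128 - X ^ 128 +
          ((X : Polynomial F) ^ 128 - X) =
          (X : Polynomial F) ^ (2 ^ (7 * (n + 2))) - X := by
        have hexp : 2 ^ (7 * (n + 2)) = 2 ^ (7 * (n + 1)) * 128 := by
          rw [show 7 * (n + 2) = 7 * (n + 1) + 7 by ring, pow_add]; norm_num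
        rw [← pow_mul, ← hexp]; ring
      rwa [e', show n + 2 = n + 1 + 1 by ring] at h'
  obtain ⟨k, hk⟩ := h7
  have hk1 : 0 < k := by omega
  have hdvd : p ∣ (X : Polynomial F) ^ (2 ^ m) - X := by
    obtain ⟨j, hj⟩ : ∃ j, k = j + 1 := ⟨k - 1, by omega⟩
    have := key j
    rwa [← hj, ← hk] at this
  -- X^(2^m) - X splits
  have hq : Fintype.card F = 2 ^ m := hF
  have hsXq : Splits ((X : Polynomial F) ^ (2 ^ m) - X) := by
    rw [← hq]
    rw [splits_iff_card_roots, FiniteField.roots_X_pow_card_sub_X,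
      FiniteField.X_pow_card_sub_X_natDegree_eq F Fintype.one_lt_card]
    simp
  have hpne : p ≠ 0 := by
    intro h
    have := congrArg (fun q => Polynomial.coeff q 0) h
    simp [hp, coeff_one] at this
  have hsplits : Splits p :=
    Splits.of_dvd hsXq
      (by
        rw [← hq]
        exact FiniteField.X_pow_card_sub_X_ne_zero F Fintype.one_lt_card)
      hdvd
  refine ⟨by rw [Polynomial.map_id]; exact hsplits, ?_⟩
  -- get a root of p
  have hdeg : p.degree = 7 := by
    rw [hp]
    compute_degree!
  obtain ⟨a, ha⟩ := hsplits.exists_eval_eq_zero (by rw [hdeg]; decide)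
  rw [hp] at ha
  simp only [eval_add, eval_pow, eval_X, eval_one] at ha
  have ha0 : a ≠ 0 := by
    rintro rfl
    simp at ha
  intro hinj
  apply ha0
  apply hinj
  show (a ^ 9 + a ^ 5 + a ^ 4 + a ^ 3 + a ^ 2) / (a ^ 8 + a ^ 4 + a ^ 2 + a + 1) =
    (0 ^ 9 + 0 ^ 5 + 0 ^ 4 + 0 ^ 3 + 0 ^ 2 : F) / (0 ^ 8 + 0 ^ 4 + 0 ^ 2 + 0 + 1)
  have hnum : a ^ 9 + a ^ 5 + a ^ 4 + a ^ 3 + a ^ 2 = 0 := by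
    have : a ^ 9 + a ^ 5 + a ^ 4 + a ^ 3 + a ^ 2 =
        a ^ 2 * (a ^ 7 + a ^ 3 + a ^ 2 + a + 1) := by ring
    rw [this, ha, mul_zero]
  rw [hnum]
  simp
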